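/- Let (a_n)_{n≥0} be a sequence of nonnegative reals, b ≥ 0, and C > 0, satisfying a_{n+1} ≤ C(b + Σ_{k=0}^{n} a_k)·a_n for all n ≥ 0. If a₀ ≤ 1/(6C) and b ≤ 1/(6C), then a_{n+1} ≤ (1/2)·a_n for all n ≥ 0; in particular Σ_{k=0}^{∞} a_k ≤ 2a₀ and a_n → 0. -/

import Mathlib

/-- Newton-iteration convergence lemma: if `(aₙ)` are
nonnegative, `b ≥ 0`, `C > 0`, `a_{n+1} ≤ C(b + Σ_{k=0}^{n} a_k)·aₙ` for all
`n`, and `a₀ ≤ 1/(6C)`, `b ≤ 1/(6C)`, then `a_{n+1} ≤ (1/2)aₙ` for all `n`;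
in particular `Σ_{k=0}^{∞} a_k ≤ 2a₀` and `aₙ → 0`. -/
theorem stmt_9 (a : ℕ → ℝ) (b C : ℝ)
    (ha : ∀ n, 0 ≤ a n) (hb : 0 ≤ b) (hC : 0 < C)
    (hrec : ∀ n, a (n + 1) ≤ C * (b + ∑ k ∈ Finset.range (n + 1), a k) * a n)
    (h0 : a 0 ≤ 1 / (6 * C)) (hb' : b ≤ 1 / (6 * C)) :
    (∀ n, a (n + 1) ≤ (1 / 2) * a n) ∧
    (∑' k, a k) ≤ 2 * a 0 ∧
    Filter.Tendsto a Filter.atTop (nhds 0) := by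
  have hC6 : (0:ℝ) < 6 * C := by linarith
  -- the half-step, given the partial-sum bound
  have half : ∀ n, (∑ k ∈ Finset.range (n + 1), a k) ≤ 2 * a 0 →
      a (n + 1) ≤ (1 / 2) * a n := by
    intro n hS
    have h1 : C * (b + ∑ k ∈ Finset.range (n + 1), a k) ≤ 1 / 2 := by
      have : b + ∑ k ∈ Finset.range (n + 1), a k ≤ 1 / (6 * C) + 2 * (1 / (6 * C)) := by
        linarith
      have h2 : C * (b + ∑ k ∈ Finset.range (n + 1), a k) ≤ C * (3 * (1 / (6 * C))) := by
        nlinarith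
      have h3 : C * (3 * (1 / (6 * C))) = 1 / 2 := by
        field_simp; ring
      linarith
    calc a (n + 1) ≤ C * (b + ∑ k ∈ Finset.range (n + 1), a k) * a n := hrec n
      _ ≤ (1 / 2) * a n := mul_le_mul_of_nonneg_right h1 (ha n)
  -- invariant: partial sums satisfy S n ≤ 2 a₀ - aₙ
  have key : ∀ n, (∑ k ∈ Finset.range (n + 1), a k) ≤ 2 * a 0 - a n := by
    intro n
    induction n with
    | zero => simp; linarith [ha 0]
    | succ m ih =>
      have hS : (∑ k ∈ Finset.range (m + 1), a k) ≤ 2 * a 0 := by linarith [ha m]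
      have hh := half m hS
      rw [Finset.sum_range_succ]
      linarith
  have halfall : ∀ n, a (n + 1) ≤ (1 / 2) * a n := by
    intro n
    exact half n (by linarith [key n, ha n])
  have hsum : ∀ n, (∑ k ∈ Finset.range n, a k) ≤ 2 * a 0 := by
    intro n
    cases n with
    | zero => simp; linarith [ha 0]
    | succ m => linarith [key m, ha m]
  have hsummable : Summable a := summable_of_sum_range_le ha hsum
  refine ⟨halfall, Summable.tsum_le_of_sum_range_le hsummable hsum, hsummable.tendsto_atTop_zero⟩
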